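/- (Lemma 2.1(iv)) Given two admissible 1D primitive states U⁻ and U⁺ with the HLLC wave speeds s⁻ = min(s_min(U⁻), s_min(U⁺)) and s⁺ = max(s_max(U⁻), s_max(U⁺)), the quantities A∓ and B∓ satisfy s⁺A⁻ - B⁻ < 0 and s⁻A⁺ - B⁺ < 0. -/

import Mathlib

noncomputable section

namespace SRHD1D

/-- Lorentz factor `γ = (1 - u²)^(-1/2)`. -/
def lorentz (u : ℝ) : ℝ := 1 / Real.sqrt (1 - u ^ 2)

/-- Specific enthalpy `h = 1 + Γ p / ((Γ - 1) ρ)` of a perfect gas. -/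
def enthalpy (G r p : ℝ) : ℝ := 1 + G * p / ((G - 1) * r)

/-- Sound speed `c_s = √(Γ p / (ρ h))`. -/
def soundSpeed (G r p : ℝ) : ℝ := Real.sqrt (G * p / (r * enthalpy G r p))

/-- Conserved rest-mass density `D = ρ γ`. -/
def Dc (r u : ℝ) : ℝ := r * lorentz u

/-- Conserved momentum `m = ρ h γ² u`. -/
def mc (G r u p : ℝ) : ℝ := r * enthalpy G r p * lorentz u ^ 2 * u

/-- Conserved total energy `E = ρ h γ² - p`. -/
def Ec (G r u p : ℝ) : ℝ := r * enthalpy G r p * lorentz u ^ 2 - p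

/-- Minimum characteristic speed `s_min = (u - c_s)/(1 - c_s u)`. -/
def sMin (G r u p : ℝ) : ℝ := (u - soundSpeed G r p) / (1 - soundSpeed G r p * u)

/-- Maximum characteristic speed `s_max = (u + c_s)/(1 + c_s u)`. -/
def sMax (G r u p : ℝ) : ℝ := (u + soundSpeed G r p) / (1 + soundSpeed G r p * u)

private lemma comb {w1 w2 f1 f2 g : ℝ} (h1 : 0 ≤ w1) (h2 : 0 ≤ w2)
    (hw : 0 < w1 + w2) (hf1 : f1 < 0) (hf2 : f2 < 0)
    (hg : (w1 + w2) * g = w1 * f1 + w2 * f2) : g < 0 := by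
  by_contra hcon
  push_neg at hcon
  rcases h1.lt_or_eq with h1' | h1'
  · nlinarith [mul_neg_of_pos_of_neg h1' hf1,
      mul_nonpos_of_nonneg_of_nonpos h2 hf2.le, mul_nonneg hw.le hcon]
  · have hw2 : 0 < w2 := by nlinarith
    nlinarith [mul_neg_of_pos_of_neg hw2 hf2, mul_nonneg hw.le hcon]

set_option maxHeartbeats 1000000 in
private lemma core (q p u c s t : ℝ) (hp : 0 < p) (hu : u ^ 2 < 1)
    (hc0 : 0 < c) (hc1 : c < 1)
    (hq2p : 2 * p < q) (hA : p * (1 + c ^ 2) < q * c ^ 2) (hB : p * (1 + c) < q * c)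
    (hs1 : -1 ≤ s) (hs2 : s ≤ (u - c) / (1 - c * u))
    (ht1 : (u + c) / (1 + c * u) ≤ t) (ht2 : t ≤ 1) :
    q * (s - u) * (t - u) + p * (1 - s * t) * (1 - u ^ 2) < 0 := by
  have hul : -1 < u := by nlinarith
  have hur : u < 1 := by nlinarith
  have hd1 : 0 < 1 - c * u := by nlinarith
  have hd2 : 0 < 1 + c * u := by nlinarith
  set a := (u - c) / (1 - c * u) with ha_def
  set b := (u + c) / (1 + c * u) with hb_def
  have ha1 : -1 < a := by
    rw [ha_def, lt_div_iff₀ hd1]; nlinarith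
  have hb1 : b < 1 := by
    rw [hb_def, div_lt_iff₀ hd2]; nlinarith
  -- corner values
  have c1 : q * (a - u) * (b - u) + p * (1 - a * b) * (1 - u ^ 2) < 0 := by
    have h1 : q * (a - u) * (b - u) + p * (1 - a * b) * (1 - u ^ 2)
        = ((1 - u ^ 2) ^ 2 * (p * (1 + c ^ 2) - q * c ^ 2)) / ((1 - c * u) * (1 + c * u)) := by
      have ha : a * (1 - c * u) = u - c := by rw [ha_def]; exact div_mul_cancel₀ _ hd1.ne'
      have hb : b * (1 + c * u) = u + c := by rw [hb_def]; exact div_mul_cancel₀ _ hd2.ne'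
      rw [eq_div_iff (mul_pos hd1 hd2).ne']
      linear_combination (q * (b * (1 + c * u) - u * (1 + c * u)) - p * (1 - u ^ 2) * b * (1 + c * u)) * ha
        + (q * ((u - c) - u * (1 - c * u)) - p * (1 - u ^ 2) * (u - c)) * hb
    rw [h1]
    apply div_neg_of_neg_of_pos
    · exact mul_neg_of_pos_of_neg (pow_pos (by nlinarith) 2) (by linarith)
    · positivity
  have c2 : q * (a - u) * (1 - u) + p * (1 - a * 1) * (1 - u ^ 2) < 0 := by
    have h1 : q * (a - u) * (1 - u) + p * (1 - a * 1) * (1 - u ^ 2)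
        = ((1 - u) * (1 - u ^ 2) * (p * (1 + c) - q * c)) / (1 - c * u) := by
      have ha : a * (1 - c * u) = u - c := by rw [ha_def]; exact div_mul_cancel₀ _ hd1.ne'
      rw [eq_div_iff hd1.ne']
      linear_combination (q * (1 - u) - p * (1 - u ^ 2)) * ha
    rw [h1]
    apply div_neg_of_neg_of_pos
    · nlinarith [mul_pos (show (0:ℝ) < 1 - u by linarith) (show (0:ℝ) < 1 - u ^ 2 by nlinarith)]
    · exact hd1
  have c3 : q * (-1 - u) * (b - u) + p * (1 - (-1) * b) * (1 - u ^ 2) < 0 := by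
    have h1 : q * (-1 - u) * (b - u) + p * (1 - (-1) * b) * (1 - u ^ 2)
        = ((1 + u) * (1 - u ^ 2) * (p * (1 + c) - q * c)) / (1 + c * u) := by
      have hb : b * (1 + c * u) = u + c := by rw [hb_def]; exact div_mul_cancel₀ _ hd2.ne'
      rw [eq_div_iff hd2.ne']
      linear_combination (q * (-1 - u) + p * (1 - u ^ 2)) * hb
    rw [h1]
    apply div_neg_of_neg_of_pos
    · nlinarith [mul_pos (show (0:ℝ) < 1 + u by linarith) (show (0:ℝ) < 1 - u ^ 2 by nlinarith)]
    · exact hd2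
  have c4 : q * (-1 - u) * (1 - u) + p * (1 - (-1) * 1) * (1 - u ^ 2) < 0 := by
    nlinarith [mul_pos (show (0:ℝ) < 1 - u ^ 2 by nlinarith) (show (0:ℝ) < q - 2 * p by linarith)]
  -- interpolate in s
  have step1 : q * (s - u) * (b - u) + p * (1 - s * b) * (1 - u ^ 2) < 0 := by
    refine comb (w1 := a - s) (w2 := s + 1) (by linarith) (by linarith) (by linarith) c3 c1 ?_
    ring
  have step2 : q * (s - u) * (1 - u) + p * (1 - s * 1) * (1 - u ^ 2) < 0 := by
    refine comb (w1 := a - s) (w2 := s + 1) (by linarith) (by linarith) (by linarith) c4 c2 ?_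
    ring
  -- interpolate in t
  refine comb (w1 := 1 - t) (w2 := t - b) (by linarith) (by linarith) (by linarith) step1 step2 ?_
  ring

set_option maxHeartbeats 1000000 in
private lemma main_ineq (G r u p s t : ℝ) (hG1 : 1 < G) (hG2 : G ≤ 2)
    (hr : 0 < r) (hu : |u| < 1) (hp : 0 < p)
    (hs1 : -1 ≤ s) (hs2 : s ≤ sMin G r u p) (ht1 : sMax G r u p ≤ t) (ht2 : t ≤ 1) :
    t * (s * Ec G r u p - mc G r u p) - (mc G r u p * (s - u) - p) < 0 := by
  have hu2 : u ^ 2 < 1 := by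
    have := abs_lt.mp hu; nlinarith
  have hG0 : G - 1 ≠ 0 := by linarith
  have hr0 : r ≠ 0 := hr.ne'
  have hhpos : 0 < enthalpy G r p := by
    have : 0 < G * p / ((G - 1) * r) := div_pos (by positivity) (by nlinarith)
    unfold enthalpy; linarith
  set h := enthalpy G r p with hh_def
  set q := r * h with hq_def
  have hq : 0 < q := mul_pos hr hhpos
  set c := soundSpeed G r p with hc_def
  have hc0 : 0 < c := Real.sqrt_pos.mpr (div_pos (by positivity) hq)
  have hc2 : c ^ 2 = G * p / q := Real.sq_sqrt (le_of_lt (div_pos (by positivity) hq))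
  have hqc : q * c ^ 2 = G * p := by rw [hc2]; field_simp
  have hq_expand : q * (G - 1) = r * (G - 1) + G * p := by
    rw [hq_def, hh_def]; unfold enthalpy; field_simp
  have hE : Ec G r u p * (1 - u ^ 2) = q - p * (1 - u ^ 2) := by
    have hx : 0 < 1 - u ^ 2 := by linarith
    have hγ : (lorentz u) ^ 2 = 1 / (1 - u ^ 2) := by
      rw [lorentz, div_pow, one_pow, Real.sq_sqrt hx.le]
    rw [Ec, hγ, hq_def, hh_def]; field_simp
  have hm : mc G r u p * (1 - u ^ 2) = q * u := by
    have hx : 0 < 1 - u ^ 2 := by linarith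
    have hγ : (lorentz u) ^ 2 = 1 / (1 - u ^ 2) := by
      rw [lorentz, div_pow, one_pow, Real.sq_sqrt hx.le]
    rw [mc, hγ, hq_def, hh_def]; field_simp
  rw [sMin, ← hc_def] at hs2
  rw [sMax, ← hc_def] at ht1
  clear_value h q c
  have hkey : c ^ 2 < G - 1 := by nlinarith
  have hc1 : c < 1 := by nlinarith
  have hq2p : 2 * p < q := by nlinarith
  have hA : p * (1 + c ^ 2) < q * c ^ 2 := by nlinarith
  have hB : p * (1 + c) < q * c := by
    have h1 : p * (1 + c) * c < q * c * c := by nlinarith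
    exact lt_of_mul_lt_mul_right h1 hc0.le
  have hcore := core q p u c s t hp hu2 hc0 hc1 hq2p hA hB hs1 hs2 ht1 ht2
  have hx : 0 < 1 - u ^ 2 := by linarith
  have hfin : (t * (s * Ec G r u p - mc G r u p) - (mc G r u p * (s - u) - p)) * (1 - u ^ 2)
      = q * (s - u) * (t - u) + p * (1 - s * t) * (1 - u ^ 2) := by
    linear_combination s * t * hE + (u - s - t) * hm
  by_contra hcon
  push_neg at hcon
  nlinarith [mul_nonneg hcon hx.le]

private lemma sMin_gt (G r u p : ℝ) (hG1 : 1 < G) (hG2 : G ≤ 2)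
    (hr : 0 < r) (hu : |u| < 1) (hp : 0 < p) :
    -1 < sMin G r u p ∧ sMax G r u p < 1 := by
  have hu2 : u ^ 2 < 1 := by have := abs_lt.mp hu; nlinarith
  have hul : -1 < u := (abs_lt.mp hu).1
  have hur : u < 1 := (abs_lt.mp hu).2
  have hG0 : G - 1 ≠ 0 := by linarith
  have hr0 : r ≠ 0 := hr.ne'
  have hhpos : 0 < enthalpy G r p := by
    have : 0 < G * p / ((G - 1) * r) := div_pos (by positivity) (by nlinarith)
    unfold enthalpy; linarith
  set h := enthalpy G r p with hh_def
  set q := r * h with hq_def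
  have hq : 0 < q := mul_pos hr hhpos
  set c := soundSpeed G r p with hc_def
  have hc0 : 0 < c := Real.sqrt_pos.mpr (div_pos (by positivity) hq)
  have hc2 : c ^ 2 = G * p / q := Real.sq_sqrt (le_of_lt (div_pos (by positivity) hq))
  have hqc : q * c ^ 2 = G * p := by rw [hc2]; field_simp
  have hq_expand : q * (G - 1) = r * (G - 1) + G * p := by
    rw [hq_def, hh_def]; unfold enthalpy; field_simp
  rw [sMin, ← hc_def, sMax, ← hc_def]
  clear_value h q c
  have hkey : c ^ 2 < G - 1 := by nlinarith
  have hc1 : c < 1 := by nlinarith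
  have hd1 : 0 < 1 - c * u := by nlinarith
  have hd2 : 0 < 1 + c * u := by nlinarith
  constructor
  · rw [lt_div_iff₀ hd1]; nlinarith
  · rw [div_lt_iff₀ hd2]; nlinarith

theorem hllc_cross_sA_sub_B_neg (G r1 u1 p1 r2 u2 p2 sm sp A1 A2 B1 B2 : ℝ)
    (hG1 : 1 < G) (hG2 : G ≤ 2)
    (hr1 : 0 < r1) (hu1 : |u1| < 1) (hp1 : 0 < p1)
    (hr2 : 0 < r2) (hu2 : |u2| < 1) (hp2 : 0 < p2)
    (hsm : sm = min (sMin G r1 u1 p1) (sMin G r2 u2 p2))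
    (hsp : sp = max (sMax G r1 u1 p1) (sMax G r2 u2 p2))
    (hA1 : A1 = sm * Ec G r1 u1 p1 - mc G r1 u1 p1)
    (hA2 : A2 = sp * Ec G r2 u2 p2 - mc G r2 u2 p2)
    (hB1 : B1 = mc G r1 u1 p1 * (sm - u1) - p1)
    (hB2 : B2 = mc G r2 u2 p2 * (sp - u2) - p2)
    :
    sp * A1 - B1 < 0 ∧ sm * A2 - B2 < 0 := by
  obtain ⟨hm1, hM1⟩ := sMin_gt G r1 u1 p1 hG1 hG2 hr1 hu1 hp1
  obtain ⟨hm2, hM2⟩ := sMin_gt G r2 u2 p2 hG1 hG2 hr2 hu2 hp2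
  have hsm1 : -1 ≤ sm := by rw [hsm]; exact le_min hm1.le hm2.le
  have hsp1 : sp ≤ 1 := by rw [hsp]; exact max_le hM1.le hM2.le
  have hsmle1 : sm ≤ sMin G r1 u1 p1 := hsm ▸ min_le_left _ _
  have hsmle2 : sm ≤ sMin G r2 u2 p2 := hsm ▸ min_le_right _ _
  have hspge1 : sMax G r1 u1 p1 ≤ sp := hsp ▸ le_max_left _ _
  have hspge2 : sMax G r2 u2 p2 ≤ sp := hsp ▸ le_max_right _ _
  have h1 := main_ineq G r1 u1 p1 sm sp hG1 hG2 hr1 hu1 hp1 hsm1 hsmle1 hspge1 hsp1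
  have h2 := main_ineq G r2 u2 p2 sm sp hG1 hG2 hr2 hu2 hp2 hsm1 hsmle2 hspge2 hsp1
  constructor
  · rw [hA1, hB1]; linarith [h1]
  · rw [hA2, hB2]
    calc sm * (sp * Ec G r2 u2 p2 - mc G r2 u2 p2) - (mc G r2 u2 p2 * (sp - u2) - p2)
        = sp * (sm * Ec G r2 u2 p2 - mc G r2 u2 p2) - (mc G r2 u2 p2 * (sm - u2) - p2) := by ring
      _ < 0 := h2

end SRHD1D
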